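/- Let H be a complex Hilbert space and T : ℝ → (H →L[ℂ] H) a function such that T 0 = 1, T (s + t) = (T s) ∘ (T t) for all s, t ≥ 0, and ‖T t‖ ≤ 1 for all t ≥ 0. Then there exist a complex Hilbert space K, a linear isometry J : H → K, and a function U : ℝ → (K →L[ℂ] K) such that U 0 = 1, U (s + t) = (U s) ∘ (U t) for all s, t ∈ ℝ, each U t is unitary with (U t)† = U (−t), and T t = J† ∘ (U t) ∘ J for every t ≥ 0. -/

import Mathlib

open ContinuousLinearMap
open scoped InnerProductSpace

universe u

namespace SzNagyDilationAux

variable {H : Type u} [NormedAddCommGroup H] [InnerProductSpace ℂ H] [CompleteSpace H]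

/-- The extension of the semigroup `T` to all of `ℝ`, using adjoints for negative times. -/
noncomputable def SK (T : ℝ → (H →L[ℂ] H)) (t : ℝ) : H →L[ℂ] H :=
  if 0 ≤ t then T t else adjoint (T (-t))

variable {T : ℝ → (H →L[ℂ] H)}

lemma SK_nonneg {t : ℝ} (ht : 0 ≤ t) : SK T t = T t := if_pos ht

lemma SK_neg_of_pos {t : ℝ} (ht : 0 < t) : SK T (-t) = adjoint (T t) := by
  rw [SK, if_neg (by linarith), neg_neg]

lemma SK_zero (hT0 : T 0 = 1) : SK T 0 = 1 := by rw [SK, if_pos le_rfl, hT0]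

lemma SK_adjoint (hT0 : T 0 = 1) (t : ℝ) : adjoint (SK T t) = SK T (-t) := by
  rcases lt_trichotomy t 0 with h | h | h
  · rw [SK, if_neg (not_le.mpr h), adjoint_adjoint, SK, if_pos (by linarith)]
  · subst h
    rw [neg_zero, SK_zero hT0, ← star_eq_adjoint, star_one]
  · rw [SK, if_pos h.le, SK_neg_of_pos h]

lemma SK_norm (hTnorm : ∀ t : ℝ, 0 ≤ t → ‖T t‖ ≤ 1) (t : ℝ) : ‖SK T t‖ ≤ 1 := by
  rw [SK]
  split_ifs with h
  · exact hTnorm t h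
  · calc ‖adjoint (T (-t))‖ = ‖T (-t)‖ := LinearIsometryEquiv.norm_map _ _
      _ ≤ 1 := hTnorm (-t) (by linarith [not_le.mp h])

lemma SK_add_nonneg (hTadd : ∀ s t : ℝ, 0 ≤ s → 0 ≤ t → T (s + t) = T s ∘L T t)
    {a b : ℝ} (ha : 0 ≤ a) (hb : 0 ≤ b) : SK T (a + b) = SK T a ∘L SK T b := by
  rw [SK_nonneg ha, SK_nonneg hb, SK_nonneg (add_nonneg ha hb)]
  exact hTadd a b ha hb

lemma SK_add_nonpos (hT0 : T 0 = 1)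
    (hTadd : ∀ s t : ℝ, 0 ≤ s → 0 ≤ t → T (s + t) = T s ∘L T t)
    {a b : ℝ} (ha : a ≤ 0) (hb : b ≤ 0) : SK T (a + b) = SK T a ∘L SK T b := by
  have h1 : SK T (a + b) = adjoint (SK T (-(a + b))) := by
    rw [SK_adjoint hT0, neg_neg]
  have h2 : (-(a + b)) = (-b) + (-a) := by ring
  rw [h1, h2, SK_add_nonneg hTadd (by linarith) (by linarith), adjoint_comp,
    SK_adjoint hT0, SK_adjoint hT0, neg_neg, neg_neg]

/-- Sz.-Nagy's positivity lemma, monotone case. -/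
lemma pos_mono (hT0 : T 0 = 1)
    (hTadd : ∀ s t : ℝ, 0 ≤ s → 0 ≤ t → T (s + t) = T s ∘L T t)
    (hTnorm : ∀ t : ℝ, 0 ≤ t → ‖T t‖ ≤ 1) :
    ∀ (n : ℕ) (t : Fin n → ℝ), Monotone t → ∀ x : Fin n → H,
      0 ≤ (∑ i, ∑ j, (⟪x i, SK T (t j - t i) (x j)⟫_ℂ)).re := by
  intro n
  induction n with
  | zero => intro t _ x; simp
  | succ m ih =>
    cases m with
    | zero =>
      intro t _ x
      have h : (∑ i : Fin 1, ∑ j : Fin 1, (⟪x i, SK T (t j - t i) (x j)⟫_ℂ))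
          = ⟪x 0, x 0⟫_ℂ := by
        simp [Fin.sum_univ_one, sub_self, SK_zero hT0]
      rw [h]
      exact inner_self_nonneg (𝕜 := ℂ) (x := x 0)
    | succ k =>
      intro t ht x
      have h01 : t 0 ≤ t 1 := ht (Fin.zero_le 1)
      have hsz : (0 : Fin (k + 1)).succ = (1 : Fin (k + 2)) := by
        ext; simp
      have h1s : ∀ i : Fin (k + 1), t 1 ≤ t i.succ := by
        intro i
        apply ht
        rw [← hsz]
        exact Fin.succ_le_succ_iff.mpr (Fin.zero_le i)
      set u : H := SK T (t 0 - t 1) (x 0) with hu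
      have hmono' : Monotone (fun i : Fin (k + 1) => t i.succ) :=
        fun i j hij => ht (Fin.succ_le_succ_iff.mpr hij)
      have hu_adj : u = adjoint (SK T (t 1 - t 0)) (x 0) := by
        rw [SK_adjoint hT0, neg_sub]
      -- cross-term identities
      have h1 : ∀ j : Fin (k + 1),
          (⟪x 0, SK T (t j.succ - t 0) (x j.succ)⟫_ℂ)
            = ⟪u, SK T (t j.succ - t 1) (x j.succ)⟫_ℂ := by
        intro j
        have e1 : t j.succ - t 0 = (t 1 - t 0) + (t j.succ - t 1) := by ring
        rw [e1, SK_add_nonneg hTadd (sub_nonneg.mpr h01) (sub_nonneg.mpr (h1s j)),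
          comp_apply, hu_adj, adjoint_inner_left]
      have h2 : ∀ i : Fin (k + 1),
          (⟪x i.succ, SK T (t 0 - t i.succ) (x 0)⟫_ℂ)
            = ⟪x i.succ, SK T (t 1 - t i.succ) u⟫_ℂ := by
        intro i
        have e1 : t 0 - t i.succ = (t 1 - t i.succ) + (t 0 - t 1) := by ring
        rw [e1, SK_add_nonpos hT0 hTadd (sub_nonpos.mpr (h1s i)) (sub_nonpos.mpr h01),
          comp_apply, ← hu]
      have h00 : (⟪x 0, SK T (t 0 - t 0) (x 0)⟫_ℂ) = ⟪x 0, x 0⟫_ℂ := by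
        rw [sub_self, SK_zero hT0, one_apply_eq_self]
      -- expansion of the full sum
      have expandL : (∑ i, ∑ j, (⟪x i, SK T (t j - t i) (x j)⟫_ℂ))
          = (∑ i : Fin (k + 1), ∑ j : Fin (k + 1),
              (⟪x i.succ, SK T (t j.succ - t i.succ) (x j.succ)⟫_ℂ))
            + (∑ j : Fin (k + 1), (⟪u, SK T (t j.succ - t 1) (x j.succ)⟫_ℂ))
            + (∑ i : Fin (k + 1), (⟪x i.succ, SK T (t 1 - t i.succ) u⟫_ℂ))
            + ⟪x 0, x 0⟫_ℂ := by
        rw [Fin.sum_univ_succ (f := fun i => ∑ j, (⟪x i, SK T (t j - t i) (x j)⟫_ℂ))]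
        rw [Fin.sum_univ_succ (f := fun j => (⟪x 0, SK T (t j - t 0) (x j)⟫_ℂ))]
        have hrow : ∀ i : Fin (k + 1),
            (∑ j, (⟪x i.succ, SK T (t j - t i.succ) (x j)⟫_ℂ))
              = (⟪x i.succ, SK T (t 1 - t i.succ) u⟫_ℂ)
                + ∑ j : Fin (k + 1), (⟪x i.succ, SK T (t j.succ - t i.succ) (x j.succ)⟫_ℂ) := by
          intro i
          rw [Fin.sum_univ_succ (f := fun j => (⟪x i.succ, SK T (t j - t i.succ) (x j)⟫_ℂ))]
          rw [h2 i]
        rw [Finset.sum_congr rfl fun i _ => hrow i, Finset.sum_add_distrib,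
          Finset.sum_congr rfl fun j _ => h1 j, h00]
        ring
      -- the new vectors
      set P : Fin (k + 1) → H := Pi.single (0 : Fin (k + 1)) u with hP
      have expandR : (∑ i : Fin (k + 1), ∑ j : Fin (k + 1),
            (⟪x i.succ + P i, SK T (t j.succ - t i.succ) (x j.succ + P j)⟫_ℂ))
          = (∑ i : Fin (k + 1), ∑ j : Fin (k + 1),
              (⟪x i.succ, SK T (t j.succ - t i.succ) (x j.succ)⟫_ℂ))
            + (∑ j : Fin (k + 1), (⟪u, SK T (t j.succ - t 1) (x j.succ)⟫_ℂ))
            + (∑ i : Fin (k + 1), (⟪x i.succ, SK T (t 1 - t i.succ) u⟫_ℂ))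
            + ⟪u, u⟫_ℂ := by
        have hterm : ∀ i j : Fin (k + 1),
            (⟪x i.succ + P i, SK T (t j.succ - t i.succ) (x j.succ + P j)⟫_ℂ)
              = (⟪x i.succ, SK T (t j.succ - t i.succ) (x j.succ)⟫_ℂ)
                + (⟪x i.succ, SK T (t j.succ - t i.succ) (P j)⟫_ℂ)
                + (⟪P i, SK T (t j.succ - t i.succ) (x j.succ)⟫_ℂ)
                + (⟪P i, SK T (t j.succ - t i.succ) (P j)⟫_ℂ) := by
          intro i j
          rw [map_add, inner_add_left, inner_add_right, inner_add_right]
          ring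
        rw [Finset.sum_congr rfl fun i (_ : i ∈ Finset.univ) =>
          Finset.sum_congr rfl fun j (_ : j ∈ Finset.univ) => hterm i j]
        simp only [Finset.sum_add_distrib]
        have hD2 : ∀ i : Fin (k + 1),
            (∑ j : Fin (k + 1), (⟪x i.succ, SK T (t j.succ - t i.succ) (P j)⟫_ℂ))
              = ⟪x i.succ, SK T (t 1 - t i.succ) u⟫_ℂ := by
          intro i
          rw [Finset.sum_eq_single (0 : Fin (k + 1))]
          · rw [hP, Pi.single_eq_same, hsz]
          · intro b _ hb
            rw [hP, Pi.single_eq_of_ne hb, map_zero, inner_zero_right]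
          · intro habs; exact absurd (Finset.mem_univ _) habs
        have hD3 : (∑ i : Fin (k + 1), ∑ j : Fin (k + 1),
              (⟪P i, SK T (t j.succ - t i.succ) (x j.succ)⟫_ℂ))
            = ∑ j : Fin (k + 1), (⟪u, SK T (t j.succ - t 1) (x j.succ)⟫_ℂ) := by
          rw [Finset.sum_eq_single (0 : Fin (k + 1))]
          · refine Finset.sum_congr rfl fun j _ => ?_
            rw [hP, Pi.single_eq_same, hsz]
          · intro b _ hb
            refine Finset.sum_eq_zero fun j _ => ?_
            rw [hP, Pi.single_eq_of_ne hb, inner_zero_left]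
          · intro habs; exact absurd (Finset.mem_univ _) habs
        have hD4 : (∑ i : Fin (k + 1), ∑ j : Fin (k + 1),
              (⟪P i, SK T (t j.succ - t i.succ) (P j)⟫_ℂ))
            = ⟪u, u⟫_ℂ := by
          rw [Finset.sum_eq_single (0 : Fin (k + 1))]
          · rw [Finset.sum_eq_single (0 : Fin (k + 1))]
            · rw [hP, Pi.single_eq_same, sub_self, SK_zero hT0, one_apply_eq_self]
            · intro b _ hb
              rw [hP, Pi.single_eq_of_ne hb, map_zero, inner_zero_right]
            · intro habs; exact absurd (Finset.mem_univ _) habs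
          · intro b _ hb
            refine Finset.sum_eq_zero fun j _ => ?_
            rw [hP, Pi.single_eq_of_ne hb, inner_zero_left]
          · intro habs; exact absurd (Finset.mem_univ _) habs
        rw [Finset.sum_congr rfl fun i (_ : i ∈ Finset.univ) => hD2 i, hD3, hD4]
        ring
      -- put things together
      have key : (∑ i, ∑ j, (⟪x i, SK T (t j - t i) (x j)⟫_ℂ))
          = (∑ i : Fin (k + 1), ∑ j : Fin (k + 1),
              (⟪x i.succ + P i, SK T (t j.succ - t i.succ) (x j.succ + P j)⟫_ℂ))
            + (⟪x 0, x 0⟫_ℂ - ⟪u, u⟫_ℂ) := by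
        rw [expandL, expandR]; ring
      have hQ' : 0 ≤ (∑ i : Fin (k + 1), ∑ j : Fin (k + 1),
          (⟪x i.succ + P i, SK T (t j.succ - t i.succ) (x j.succ + P j)⟫_ℂ)).re :=
        ih (fun i => t i.succ) hmono' (fun j => x j.succ + P j)
      have hnu : ‖u‖ ≤ ‖x 0‖ := by
        calc ‖u‖ ≤ ‖SK T (t 0 - t 1)‖ * ‖x 0‖ := le_opNorm _ _
          _ ≤ 1 * ‖x 0‖ :=
            mul_le_mul_of_nonneg_right (SK_norm hTnorm _) (norm_nonneg _)
          _ = ‖x 0‖ := one_mul _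
      have hre : (⟪u, u⟫_ℂ).re ≤ (⟪x 0, x 0⟫_ℂ).re := by
        have e1 : (⟪u, u⟫_ℂ).re = ‖u‖ * ‖u‖ := inner_self_eq_norm_mul_norm (𝕜 := ℂ) u
        have e2 : (⟪x 0, x 0⟫_ℂ).re = ‖x 0‖ * ‖x 0‖ :=
          inner_self_eq_norm_mul_norm (𝕜 := ℂ) (x 0)
        rw [e1, e2]
        exact mul_self_le_mul_self (norm_nonneg _) hnu
      have := congrArg Complex.re key
      rw [Complex.add_re, Complex.sub_re] at this
      rw [this]
      linarith

/-- Sz.-Nagy's positivity lemma, general case. -/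
lemma pos_all (hT0 : T 0 = 1)
    (hTadd : ∀ s t : ℝ, 0 ≤ s → 0 ≤ t → T (s + t) = T s ∘L T t)
    (hTnorm : ∀ t : ℝ, 0 ≤ t → ‖T t‖ ≤ 1)
    (n : ℕ) (t : Fin n → ℝ) (x : Fin n → H) :
    0 ≤ (∑ i, ∑ j, (⟪x i, SK T (t j - t i) (x j)⟫_ℂ)).re := by
  set σ := Tuple.sort t with hσ
  have hQ : (∑ i, ∑ j, (⟪x i, SK T (t j - t i) (x j)⟫_ℂ))
      = ∑ i, ∑ j, (⟪x (σ i), SK T (t (σ j) - t (σ i)) (x (σ j))⟫_ℂ) := by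
    rw [← Equiv.sum_comp σ (fun i => ∑ j, (⟪x i, SK T (t j - t i) (x j)⟫_ℂ))]
    exact Finset.sum_congr rfl fun i _ =>
      (Equiv.sum_comp σ (fun j => (⟪x (σ i), SK T (t j - t (σ i)) (x j)⟫_ℂ))).symm
  rw [hQ]
  exact pos_mono hT0 hTadd hTnorm n (fun i => t (σ i)) (Tuple.monotone_sort t)
    (fun i => x (σ i))

/-- The semi-inner-product on finitely supported `H`-valued functions on `ℝ`. -/
noncomputable def innerV (T : ℝ → (H →L[ℂ] H)) (f g : ℝ →₀ H) : ℂ :=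
  f.sum fun s xs => g.sum fun r yr => ⟪xs, SK T (r - s) yr⟫_ℂ

lemma innerV_eq_sum (f g : ℝ →₀ H) :
    innerV T f g = ∑ s ∈ f.support, ∑ r ∈ g.support, (⟪f s, SK T (r - s) (g r)⟫_ℂ) := rfl

lemma innerV_conj (hT0 : T 0 = 1) (f g : ℝ →₀ H) :
    (starRingEnd ℂ) (innerV T g f) = innerV T f g := by
  rw [innerV_eq_sum, innerV_eq_sum]
  simp only [map_sum]
  rw [Finset.sum_comm]
  refine Finset.sum_congr rfl fun r _ => Finset.sum_congr rfl fun s _ => ?_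
  rw [inner_conj_symm]
  have hadj : SK T (r - s) = adjoint (SK T (s - r)) := by
    rw [SK_adjoint hT0, neg_sub]
  rw [hadj, adjoint_inner_left]

lemma innerV_add_left (f₁ f₂ g : ℝ →₀ H) :
    innerV T (f₁ + f₂) g = innerV T f₁ g + innerV T f₂ g := by
  unfold innerV
  apply Finsupp.sum_add_index'
  · intro a
    simp [Finsupp.sum]
  · intro a b₁ b₂
    simp [Finsupp.sum, inner_add_left, Finset.sum_add_distrib]

lemma innerV_smul_left (r : ℂ) (f g : ℝ →₀ H) :
    innerV T (r • f) g = (starRingEnd ℂ) r * innerV T f g := by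
  unfold innerV
  rw [Finsupp.sum_smul_index' (fun i => by simp [Finsupp.sum])]
  simp [Finsupp.sum, inner_smul_left, Finset.mul_sum]
  exact Finset.sum_congr rfl fun _ _ => Finset.sum_congr rfl fun _ _ => mul_comm _ _

lemma innerV_self_nonneg (hT0 : T 0 = 1)
    (hTadd : ∀ s t : ℝ, 0 ≤ s → 0 ≤ t → T (s + t) = T s ∘L T t)
    (hTnorm : ∀ t : ℝ, 0 ≤ t → ‖T t‖ ≤ 1) (f : ℝ →₀ H) :
    0 ≤ (innerV T f f).re := by
  classical
  set n := f.support.card with hn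
  set e := f.support.orderIsoOfFin hn.symm with he
  have hfs : innerV T f f
      = ∑ i : Fin n, ∑ j : Fin n,
          (⟪f ((e i : ℝ)), SK T ((e j : ℝ) - (e i : ℝ)) (f ((e j : ℝ)))⟫_ℂ) := by
    rw [innerV_eq_sum]
    rw [← Finset.sum_coe_sort f.support
      (fun s => ∑ r ∈ f.support, (⟪f s, SK T (r - (s : ℝ)) (f r)⟫_ℂ))]
    rw [← Equiv.sum_comp e.toEquiv
      (fun s : f.support => ∑ r ∈ f.support, (⟪f (s : ℝ), SK T (r - (s : ℝ)) (f r)⟫_ℂ))]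
    refine Finset.sum_congr rfl fun i _ => ?_
    rw [← Finset.sum_coe_sort f.support
      (fun r => (⟪f ((e.toEquiv i : ℝ)), SK T (r - ((e.toEquiv i : ℝ))) (f r)⟫_ℂ))]
    rw [← Equiv.sum_comp e.toEquiv
      (fun r : f.support => (⟪f ((e.toEquiv i : ℝ)), SK T ((r : ℝ) - ((e.toEquiv i : ℝ))) (f (r : ℝ))⟫_ℂ))]
    rfl
  rw [hfs]
  exact pos_all hT0 hTadd hTnorm n (fun i => (e i : ℝ)) (fun i => f (e i : ℝ))

/-- The translation action on `ℝ →₀ H`. -/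
noncomputable def shiftF (r : ℝ) (f : ℝ →₀ H) : ℝ →₀ H :=
  Finsupp.equivMapDomain (Equiv.addRight r) f

lemma shiftF_apply (r : ℝ) (f : ℝ →₀ H) (a : ℝ) : shiftF r f a = f (a - r) := by
  simp [shiftF, Finsupp.equivMapDomain_apply, Equiv.addRight, sub_eq_add_neg]

lemma shiftF_single (r s : ℝ) (x : H) :
    shiftF r (Finsupp.single s x) = Finsupp.single (s + r) x := by
  rw [shiftF, Finsupp.equivMapDomain_single]
  rfl

lemma shiftF_shiftF (r s : ℝ) (f : ℝ →₀ H) :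
    shiftF s (shiftF r f) = shiftF (r + s) f := by
  ext a
  rw [shiftF_apply, shiftF_apply, shiftF_apply]
  congr 1
  ring

lemma shiftF_zero (f : ℝ →₀ H) : shiftF 0 f = f := by
  ext a
  rw [shiftF_apply, sub_zero]

lemma innerV_shift (r : ℝ) (f g : ℝ →₀ H) :
    innerV T (shiftF r f) (shiftF r g) = innerV T f g := by
  unfold innerV shiftF
  rw [Finsupp.equivMapDomain_eq_mapDomain, Finsupp.equivMapDomain_eq_mapDomain]
  rw [Finsupp.sum_mapDomain_index_inj (Equiv.addRight r).injective]
  refine Finsupp.sum_congr fun s _ => ?_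
  rw [Finsupp.sum_mapDomain_index_inj (Equiv.addRight r).injective]
  refine Finsupp.sum_congr fun q _ => ?_
  have harg : (Equiv.addRight r) q - (Equiv.addRight r) s = q - s := by
    simp [Equiv.coe_addRight]
  rw [harg]

lemma innerV_shift_neg (r : ℝ) (f g : ℝ →₀ H) :
    innerV T (shiftF (-r) f) g = innerV T f (shiftF r g) := by
  calc innerV T (shiftF (-r) f) g
      = innerV T (shiftF r (shiftF (-r) f)) (shiftF r g) := (innerV_shift r _ _).symm
    _ = innerV T f (shiftF r g) := by rw [shiftF_shiftF, neg_add_cancel, shiftF_zero]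

lemma innerV_single_single (s r : ℝ) (x y : H) :
    innerV T (Finsupp.single s x) (Finsupp.single r y) = ⟪x, SK T (r - s) y⟫_ℂ := by
  unfold innerV
  rw [Finsupp.sum_single_index (by simp [Finsupp.sum])]
  rw [Finsupp.sum_single_index (by simp)]

/-- The pre-inner-product space structure. -/
noncomputable def dilCore (hT0 : T 0 = 1)
    (hTadd : ∀ s t : ℝ, 0 ≤ s → 0 ≤ t → T (s + t) = T s ∘L T t)
    (hTnorm : ∀ t : ℝ, 0 ≤ t → ‖T t‖ ≤ 1) :
    PreInnerProductSpace.Core ℂ (ℝ →₀ H) where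
  inner := innerV T
  conj_inner_symm := fun f g => innerV_conj hT0 f g
  re_inner_nonneg := fun f => innerV_self_nonneg hT0 hTadd hTnorm f
  add_left := fun f₁ f₂ g => innerV_add_left f₁ f₂ g
  smul_left := fun f g r => innerV_smul_left r f g

/-- Type synonym for the dilation pre-Hilbert space, to isolate instances. -/
def DilV (H : Type u) [Zero H] : Type u := ℝ →₀ H

end SzNagyDilationAux

open SzNagyDilationAux UniformSpace

set_option maxHeartbeats 1000000 in
/-- **Application 3: dilation of a one-parameter semigroup of contractions.**  A
contraction semigroup `(T t)_{t ≥ 0}` on a Hilbert space `H` dilates to a one-parameter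
group `(U t)_{t ∈ ℝ}` of unitary operators on a larger Hilbert space `K`, with
`T t = J† ∘ U t ∘ J` for all `t ≥ 0`. -/
theorem contraction_semigroup_unitary_dilation
    {H : Type u} [NormedAddCommGroup H] [InnerProductSpace ℂ H] [CompleteSpace H]
    (T : ℝ → (H →L[ℂ] H))
    (hT0 : T 0 = 1)
    (hTadd : ∀ s t : ℝ, 0 ≤ s → 0 ≤ t → T (s + t) = T s ∘L T t)
    (hTnorm : ∀ t : ℝ, 0 ≤ t → ‖T t‖ ≤ 1) :
    ∃ (K : Type u) (_ : NormedAddCommGroup K) (_ : InnerProductSpace ℂ K)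
      (_ : CompleteSpace K) (J : H →ₗᵢ[ℂ] K) (U : ℝ → (K →L[ℂ] K)),
      U 0 = 1 ∧
      (∀ s t : ℝ, U (s + t) = U s ∘L U t) ∧
      (∀ t : ℝ, adjoint (U t) = U (-t) ∧
        adjoint (U t) ∘L U t = 1 ∧ U t ∘L adjoint (U t) = 1) ∧
      (∀ t : ℝ, 0 ≤ t →
        T t = adjoint J.toContinuousLinearMap ∘L U t ∘L J.toContinuousLinearMap) := by
  classical
  letI c : PreInnerProductSpace.Core ℂ (ℝ →₀ H) := dilCore hT0 hTadd hTnorm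
  letI i1 : SeminormedAddCommGroup (DilV H) :=
    @InnerProductSpace.Core.toSeminormedAddCommGroup ℂ (ℝ →₀ H) _ _ _ c
  letI i2 : NormedSpace ℂ (DilV H) :=
    @InnerProductSpace.Core.toNormedSpace ℂ (ℝ →₀ H) _ _ _ c
  letI i3 : InnerProductSpace ℂ (DilV H) :=
    { toNormedSpace := i2
      inner := fun f g => innerV T f g
      norm_sq_eq_re_inner := fun f => Real.sq_sqrt (c.re_inner_nonneg f)
      conj_inner_symm := c.conj_inner_symm
      add_left := c.add_left
      smul_left := c.smul_left }
  have hinnerV : ∀ f g : DilV H, (⟪f, g⟫_ℂ : ℂ) = innerV T f g := fun _ _ => rfl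
  have hnormV : ∀ f : DilV H, ‖f‖ = Real.sqrt (innerV T f f).re := fun f => rfl
  -- the translation operators on `DilV H`
  let τlin : ℝ → (DilV H →ₗ[ℂ] DilV H) := fun r =>
    (Finsupp.domLCongr (Equiv.addRight r) : (ℝ →₀ H) ≃ₗ[ℂ] (ℝ →₀ H)).toLinearMap
  have hτlin : ∀ (r : ℝ) (f : DilV H), τlin r f = shiftF r f := fun r f => rfl
  have hshift_norm : ∀ (r : ℝ) (f : DilV H), ‖τlin r f‖ ≤ 1 * ‖f‖ := by
    intro r f
    rw [one_mul]
    have heq : ‖τlin r f‖ = ‖f‖ :=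
      calc ‖τlin r f‖ = Real.sqrt ((innerV T (shiftF r f) (shiftF r f)).re) := by
            rw [hnormV, hτlin]
        _ = Real.sqrt ((innerV T f f).re) :=
          congrArg (fun z : ℂ => Real.sqrt z.re) (innerV_shift (T := T) r f f)
        _ = ‖f‖ := (hnormV f).symm
    exact le_of_eq heq
  let τ : ℝ → (DilV H →L[ℂ] DilV H) := fun r =>
    LinearMap.mkContinuous (τlin r) 1 (fun f => hshift_norm r f)
  have hτ : ∀ (r : ℝ) (f : DilV H), τ r f = shiftF r f := fun r f => rfl
  -- the unitary group
  have hUmapcoe : ∀ (r : ℝ) (f : DilV H),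
      Completion.map (⇑(τ r)) (↑f : Completion (DilV H)) = (↑(τ r f) : Completion (DilV H)) :=
    fun r f => Completion.map_coe (τ r).uniformContinuous f
  let U : ℝ → (Completion (DilV H) →L[ℂ] Completion (DilV H)) := fun r =>
    { toFun := Completion.map (⇑(τ r))
      map_add' := by
        intro a b
        refine Completion.induction_on₂ a b ?_ ?_
        · apply isClosed_eq
          · exact Completion.continuous_map.comp continuous_add
          · exact (Continuous.add (f := fun y : Completion (DilV H) × Completion (DilV H) =>
              Completion.map (⇑(τ r)) y.1) (g := fun y => Completion.map (⇑(τ r)) y.2)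
              (Completion.continuous_map.comp continuous_fst)
              (Completion.continuous_map.comp continuous_snd))
        · intro f g
          show Completion.map (⇑(τ r)) ((↑f : Completion (DilV H)) + ↑g)
            = Completion.map (⇑(τ r)) ↑f + Completion.map (⇑(τ r)) ↑g
          rw [← Completion.coe_add, hUmapcoe, map_add, Completion.coe_add, hUmapcoe, hUmapcoe]
      map_smul' := by
        intro m a
        refine Completion.induction_on a ?_ ?_
        · apply isClosed_eq
          · exact Completion.continuous_map.comp (continuous_const_smul m)
          · exact (continuous_const_smul m).comp Completion.continuous_map
        · intro f
          show Completion.map (⇑(τ r)) (m • (↑f : Completion (DilV H)))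
            = m • Completion.map (⇑(τ r)) ↑f
          rw [← Completion.coe_smul, hUmapcoe, map_smul, Completion.coe_smul, hUmapcoe]
      cont := Completion.continuous_map }
  have hUcoe : ∀ (r : ℝ) (f : DilV H),
      U r (↑f : Completion (DilV H)) = (↑(τ r f) : Completion (DilV H)) :=
    fun r f => hUmapcoe r f
  have hτadd : ∀ (s t : ℝ) (f : DilV H), τ s (τ t f) = τ (s + t) f := by
    intro s t f
    rw [hτ, hτ, hτ]
    rw [show (shiftF s (shiftF t f) : ℝ →₀ H) = shiftF (t + s) f from shiftF_shiftF t s f,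
      add_comm t s]
  have hU0 : U 0 = 1 := by
    apply ContinuousLinearMap.ext
    intro a
    refine Completion.induction_on a ?_ ?_
    · apply isClosed_eq
      · exact (U 0).continuous
      · exact (1 : Completion (DilV H) →L[ℂ] Completion (DilV H)).continuous
    · intro f
      rw [hUcoe, one_apply_eq_self, hτ]
      exact congrArg _ (shiftF_zero f)
  have hUadd : ∀ s t : ℝ, U (s + t) = U s ∘L U t := by
    intro s t
    apply ContinuousLinearMap.ext
    intro a
    refine Completion.induction_on a ?_ ?_
    · apply isClosed_eq
      · exact (U (s + t)).continuous
      · exact (U s ∘L U t).continuous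
    · intro f
      rw [comp_apply, hUcoe, hUcoe, hUcoe, hτadd]
  have hUadj : ∀ r : ℝ, adjoint (U r) = U (-r) := by
    intro r
    have h : U (-r) = adjoint (U r) := by
      rw [ContinuousLinearMap.eq_adjoint_iff]
      intro a b
      refine Completion.induction_on₂ a b ?_ ?_
      · apply isClosed_eq
        · exact Continuous.inner ((U (-r)).continuous.comp continuous_fst) continuous_snd
        · exact Continuous.inner continuous_fst ((U r).continuous.comp continuous_snd)
      · intro f g
        rw [hUcoe, hUcoe, Completion.inner_coe, Completion.inner_coe, hinnerV, hinnerV]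
        exact innerV_shift_neg r f g
    exact h.symm
  -- the isometric embedding J
  let sing : H →ₗ[ℂ] DilV H := Finsupp.lsingle (0 : ℝ)
  let Jlin : H →ₗ[ℂ] Completion (DilV H) :=
    (Completion.toComplₗᵢ (𝕜 := ℂ) (E := DilV H)).toLinearMap.comp sing
  have hJnorm : ∀ x : H, ‖Jlin x‖ = ‖x‖ := by
    intro x
    have e0 : ‖Jlin x‖ = ‖(sing x : DilV H)‖ := Completion.norm_coe (sing x)
    have e1 : innerV T (sing x) (sing x) = (⟪x, x⟫_ℂ : ℂ) := by
      have h := innerV_single_single (T := T) 0 0 x x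
      rw [sub_self, SK_zero hT0, one_apply_eq_self] at h
      exact h
    rw [e0, hnormV, e1]
    exact (norm_eq_sqrt_re_inner (𝕜 := ℂ) x).symm
  let J : H →ₗᵢ[ℂ] Completion (DilV H) := ⟨Jlin, hJnorm⟩
  refine ⟨Completion (DilV H), inferInstance, inferInstance, inferInstance, J, U,
    hU0, hUadd, fun t => ⟨hUadj t, ?_, ?_⟩, ?_⟩
  · rw [hUadj, ← hUadd, neg_add_cancel, hU0]
  · rw [hUadj, ← hUadd, add_neg_cancel, hU0]
  · intro t ht
    apply ContinuousLinearMap.ext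
    intro x
    apply ext_inner_left ℂ
    intro v
    simp only [comp_apply]
    rw [ContinuousLinearMap.adjoint_inner_right]
    let w : DilV H := (Finsupp.single t x : ℝ →₀ H)
    have e2 : τ t (sing x) = w := by
      rw [hτ]
      show (shiftF t (Finsupp.single (0:ℝ) x) : ℝ →₀ H) = Finsupp.single t x
      rw [shiftF_single, zero_add]
    have e1 : U t (J.toContinuousLinearMap x) = (↑w : Completion (DilV H)) := by
      have h := hUcoe t (sing x)
      rw [e2] at h
      exact h
    rw [e1]
    have e3 : (⟪J.toContinuousLinearMap v, (↑w : Completion (DilV H))⟫_ℂ : ℂ)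
        = innerV T (Finsupp.single (0:ℝ) v) (Finsupp.single t x) :=
      Completion.inner_coe (𝕜 := ℂ) (E := DilV H) (sing v) w
    rw [e3, innerV_single_single, sub_zero, SK_nonneg ht]
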